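/- Let (a(n)) be a sequence of reals such that (a(n)/m mod 1)_{n} is equidistributed in ℝ/ℤ for every integer m ≥ 2. Then for every rational γ ∈ ℚ∖ℤ, lim_{N→∞} (1/N)∑_{n=1}^N e^{2πi γ ⌊a(n)⌋} = 0. -/

import Mathlib

open Filter Set MeasureTheory AddCircle

local notation "𝕋" => AddCircle (1:ℝ)

lemma myIntegrable (f : C(𝕋, ℂ)) : Integrable f (haarAddCircle) :=
  (BoundedContinuousFunction.mkOfCompact f).integrable _

lemma myIntegrableR (f : C(𝕋, ℝ)) : Integrable f (haarAddCircle) :=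
  (BoundedContinuousFunction.mkOfCompact f).integrable _

lemma integral_fourier_zero' {k : ℤ} (hk : k ≠ 0) :
    (∫ x : 𝕋, fourier k x ∂haarAddCircle) = 0 :=
  integral_eq_zero_of_add_right_eq_neg (fourier_add_half_inv_index hk one_pos)

lemma haar_closedBall (x : 𝕋) (ε : ℝ) :
    haarAddCircle (Metric.closedBall x ε) = ENNReal.ofReal (min 1 (2 * ε)) := by
  have h := AddCircle.volume_closedBall (T := 1) (x := x) ε
  rwa [volume_eq_smul_haarAddCircle, ENNReal.ofReal_one, one_smul] at h

lemma weyl_cont (z : ℕ → 𝕋)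
    (h : ∀ k : ℤ, k ≠ 0 → Tendsto (fun N : ℕ => (N : ℂ)⁻¹ * ∑ n ∈ Finset.Icc 1 N,
        fourier k (z n)) atTop (nhds 0))
    (f : C(𝕋, ℂ)) :
    Tendsto (fun N : ℕ => (N : ℂ)⁻¹ * ∑ n ∈ Finset.Icc 1 N, f (z n)) atTop
      (nhds (∫ x, f x ∂haarAddCircle)) := by
  have hspan : ∀ g ∈ Submodule.span ℂ (Set.range (@fourier 1)),
      Tendsto (fun N : ℕ => (N : ℂ)⁻¹ * ∑ n ∈ Finset.Icc 1 N, g (z n)) atTop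
        (nhds (∫ x, g x ∂haarAddCircle)) := by
    intro g hg
    induction hg using Submodule.span_induction with
    | mem g hgm =>
      obtain ⟨k, rfl⟩ := hgm
      by_cases hk : k = 0
      · subst hk
        have h1 : (∫ x : 𝕋, fourier 0 x ∂haarAddCircle) = 1 := by
          simp [fourier_zero]
        rw [h1]
        refine Tendsto.congr' ?_ (tendsto_const_nhds (x := (1:ℂ)))
        filter_upwards [eventually_ge_atTop 1] with N hN
        simp only [fourier_zero]
        rw [Finset.sum_const, Nat.card_Icc]
        have hN' : (N : ℂ) ≠ 0 := by
          have : N ≠ 0 := by omega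
          exact_mod_cast this
        simp only [Nat.add_sub_cancel, nsmul_eq_mul, mul_one]
        field_simp
      · rw [integral_fourier_zero' hk]; exact h k hk
    | zero => simpa using tendsto_const_nhds
    | add g₁ g₂ _ _ h₁ h₂ =>
      have := h₁.add h₂
      rw [← integral_add (myIntegrable g₁) (myIntegrable g₂)] at this
      refine this.congr fun N => ?_
      simp [ContinuousMap.add_apply, Finset.sum_add_distrib, mul_add]
    | smul c g₁ _ h₁ =>
      simp only [ContinuousMap.smul_apply]
      rw [integral_smul]
      have h2 : Tendsto (fun N : ℕ => c * ((N : ℂ)⁻¹ * ∑ n ∈ Finset.Icc 1 N, g₁ (z n)))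
          atTop (nhds (c • ∫ x, g₁ x ∂haarAddCircle)) := by
        simpa [smul_eq_mul] using h₁.const_mul c
      refine Tendsto.congr (fun N => ?_) h2
      simp only [smul_eq_mul, ← Finset.mul_sum]
      ring
  -- density
  have hmem : f ∈ closure ((Submodule.span ℂ (Set.range (@fourier 1)) : Submodule ℂ C(𝕋, ℂ)) : Set C(𝕋, ℂ)) := by
    have htop := span_fourier_closure_eq_top (T := 1)
    have : f ∈ (Submodule.span ℂ (Set.range (@fourier 1))).topologicalClosure := by
      rw [htop]; trivial
    exact this
  rw [Metric.tendsto_atTop]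
  intro ε hε
  obtain ⟨g, hgmem, hgd⟩ := Metric.mem_closure_iff.mp hmem (ε/4) (by linarith)
  have hg := hspan g hgmem
  rw [Metric.tendsto_atTop] at hg
  obtain ⟨N₀, hN₀⟩ := hg (ε/4) (by linarith)
  refine ⟨max N₀ 1, fun N hN => ?_⟩
  have hN1 : 1 ≤ N := le_trans (le_max_right _ _) hN
  have hNN₀ : N₀ ≤ N := le_trans (le_max_left _ _) hN
  have hNpos : (0:ℝ) < N := by exact_mod_cast hN1
  have key1 : dist ((N : ℂ)⁻¹ * ∑ n ∈ Finset.Icc 1 N, f (z n))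
      ((N : ℂ)⁻¹ * ∑ n ∈ Finset.Icc 1 N, g (z n)) ≤ dist f g := by
    rw [dist_eq_norm, ← mul_sub, ← Finset.sum_sub_distrib]
    rw [norm_mul]
    have h2 : ‖∑ n ∈ Finset.Icc 1 N, (f (z n) - g (z n))‖ ≤ N * dist f g := by
      refine le_trans (norm_sum_le _ _) ?_
      have : ∀ n ∈ Finset.Icc 1 N, ‖f (z n) - g (z n)‖ ≤ dist f g := by
        intro n _
        rw [dist_eq_norm]
        exact le_trans (le_of_eq (by simp)) (ContinuousMap.norm_coe_le_norm (f - g) (z n))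
      refine le_trans (Finset.sum_le_sum this) ?_
      rw [Finset.sum_const, Nat.card_Icc, Nat.add_sub_cancel, nsmul_eq_mul]
    have h3 : ‖(N:ℂ)⁻¹‖ = (N:ℝ)⁻¹ := by
      rw [norm_inv]; norm_cast
    rw [h3]
    calc (N:ℝ)⁻¹ * ‖∑ n ∈ Finset.Icc 1 N, (f (z n) - g (z n))‖
        ≤ (N:ℝ)⁻¹ * (N * dist f g) := by
          exact mul_le_mul_of_nonneg_left h2 (by positivity)
      _ = dist f g := by field_simp
  have key2 : dist (∫ x, g x ∂haarAddCircle) (∫ x, f x ∂haarAddCircle) ≤ dist f g := by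
    rw [dist_eq_norm, ← integral_sub (myIntegrable g) (myIntegrable f)]
    have : ∀ᵐ x ∂(haarAddCircle : Measure 𝕋), ‖g x - f x‖ ≤ dist f g := by
      refine Eventually.of_forall fun x => ?_
      rw [dist_comm, dist_eq_norm]
      exact le_trans (le_of_eq (by simp)) (ContinuousMap.norm_coe_le_norm (g - f) x)
    calc ‖∫ x, (g x - f x) ∂haarAddCircle‖ ≤ dist f g * (haarAddCircle univ).toReal :=
          norm_integral_le_of_norm_le_const this
      _ = dist f g := by simp
  calc dist ((N : ℂ)⁻¹ * ∑ n ∈ Finset.Icc 1 N, f (z n)) (∫ x, f x ∂haarAddCircle)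
      ≤ dist ((N : ℂ)⁻¹ * ∑ n ∈ Finset.Icc 1 N, f (z n))
          ((N : ℂ)⁻¹ * ∑ n ∈ Finset.Icc 1 N, g (z n))
        + dist ((N : ℂ)⁻¹ * ∑ n ∈ Finset.Icc 1 N, g (z n)) (∫ x, g x ∂haarAddCircle)
        + dist (∫ x, g x ∂haarAddCircle) (∫ x, f x ∂haarAddCircle) := dist_triangle4 _ _ _ _
    _ < ε/4 + ε/4 + ε/4 := by
        have := hN₀ N hNN₀
        have h1 := lt_of_le_of_lt key1 hgd
        have h2 := lt_of_le_of_lt key2 hgd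
        linarith
    _ < ε := by linarith

noncomputable def rbump (c R δ : ℝ) : C(𝕋, ℝ) :=
  ⟨fun x => max 0 (min 1 ((R - dist x ((c : ℝ) : 𝕋)) / δ)), by
    refine Continuous.max continuous_const (Continuous.min continuous_const ?_)
    exact (continuous_const.sub (continuous_id.dist continuous_const)).div_const δ⟩

lemma rbump_nonneg (c R δ : ℝ) (x : 𝕋) : 0 ≤ rbump c R δ x := le_max_left _ _

lemma rbump_le_one (c R δ : ℝ) (x : 𝕋) : rbump c R δ x ≤ 1 :=
  max_le zero_le_one (min_le_left _ _)

lemma rbump_eq_one {c R δ : ℝ} (hδ : 0 < δ) {x : 𝕋} (h : dist x ((c : ℝ) : 𝕋) ≤ R - δ) :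
    rbump c R δ x = 1 := by
  have h1 : (1:ℝ) ≤ (R - dist x ((c : ℝ) : 𝕋)) / δ := by
    rw [le_div_iff₀ hδ]; linarith
  simp only [rbump, ContinuousMap.coe_mk]
  rw [min_eq_left h1, max_eq_right zero_le_one]

lemma rbump_eq_zero {c R δ : ℝ} (hδ : 0 < δ) {x : 𝕋} (h : R ≤ dist x ((c : ℝ) : 𝕋)) :
    rbump c R δ x = 0 := by
  have h1 : (R - dist x ((c : ℝ) : 𝕋)) / δ ≤ 0 := by
    apply div_nonpos_of_nonpos_of_nonneg (by linarith) hδ.le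
  simp only [rbump, ContinuousMap.coe_mk]
  rw [max_eq_left]
  exact le_trans (min_le_right _ _) h1

lemma integral_rbump_le {c R δ : ℝ} (hδ : 0 < δ) (hR : 0 ≤ R) :
    ∫ x, rbump c R δ x ∂haarAddCircle ≤ min 1 (2 * R) := by
  have hle : ∀ x : 𝕋, rbump c R δ x ≤
      Set.indicator (Metric.closedBall ((c : ℝ) : 𝕋) R) (fun _ => (1:ℝ)) x := by
    intro x
    by_cases hx : x ∈ Metric.closedBall ((c : ℝ) : 𝕋) R
    · rw [Set.indicator_of_mem hx]; exact rbump_le_one _ _ _ _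
    · rw [Set.indicator_of_notMem hx]
      rw [rbump_eq_zero hδ (le_of_not_ge (by simpa [Metric.mem_closedBall] using hx))]
  have hint : Integrable (Set.indicator (Metric.closedBall ((c : ℝ) : 𝕋) R)
      (fun _ => (1:ℝ))) haarAddCircle := by
    refine (integrable_indicator_iff Metric.isClosed_closedBall.measurableSet).mpr ?_
    exact integrableOn_const (measure_ne_top _ _)
  calc ∫ x, rbump c R δ x ∂haarAddCircle
      ≤ ∫ x, Set.indicator (Metric.closedBall ((c : ℝ) : 𝕋) R) (fun _ => (1:ℝ)) x
          ∂haarAddCircle := integral_mono (myIntegrableR _) hint hle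
    _ = (haarAddCircle (Metric.closedBall ((c : ℝ) : 𝕋) R)).toReal • (1:ℝ) := by
        rw [integral_indicator_const _ Metric.isClosed_closedBall.measurableSet]; rfl
    _ = min 1 (2 * R) := by
        rw [haar_closedBall, smul_eq_mul, mul_one, ENNReal.toReal_ofReal]
        exact le_min zero_le_one (by linarith)

lemma le_integral_rbump {c R δ : ℝ} (hδ : 0 < δ) (hδR : δ ≤ R) :
    min 1 (2 * (R - δ)) ≤ ∫ x, rbump c R δ x ∂haarAddCircle := by
  have hle : ∀ x : 𝕋, Set.indicator (Metric.closedBall ((c : ℝ) : 𝕋) (R - δ))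
      (fun _ => (1:ℝ)) x ≤ rbump c R δ x := by
    intro x
    by_cases hx : x ∈ Metric.closedBall ((c : ℝ) : 𝕋) (R - δ)
    · rw [Set.indicator_of_mem hx, rbump_eq_one hδ (by simpa [Metric.mem_closedBall] using hx)]
    · rw [Set.indicator_of_notMem hx]; exact rbump_nonneg _ _ _ _
  have hint : Integrable (Set.indicator (Metric.closedBall ((c : ℝ) : 𝕋) (R - δ))
      (fun _ => (1:ℝ))) haarAddCircle := by
    refine (integrable_indicator_iff Metric.isClosed_closedBall.measurableSet).mpr ?_
    exact integrableOn_const (measure_ne_top _ _)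
  calc min 1 (2 * (R - δ))
      = (haarAddCircle (Metric.closedBall ((c : ℝ) : 𝕋) (R - δ))).toReal • (1:ℝ) := by
        rw [haar_closedBall, smul_eq_mul, mul_one, ENNReal.toReal_ofReal]
        exact le_min zero_le_one (by linarith)
    _ = ∫ x, Set.indicator (Metric.closedBall ((c : ℝ) : 𝕋) (R - δ)) (fun _ => (1:ℝ)) x
          ∂haarAddCircle := by
        rw [integral_indicator_const _ Metric.isClosed_closedBall.measurableSet]; rfl
    _ ≤ _ := integral_mono hint (myIntegrableR _) hle

-- distance lemmas
lemma abs_sub_round_le_abs (x : ℝ) : |x - round x| ≤ |x| := by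
  rw [abs_sub_round_eq_min]
  rcases le_or_gt 0 x with hx | hx
  · refine le_trans (min_le_left _ _) ?_
    rw [abs_of_nonneg hx]
    have : (0:ℤ) ≤ ⌊x⌋ := Int.floor_nonneg.mpr hx
    have h2 : (0:ℝ) ≤ (⌊x⌋ : ℝ) := by exact_mod_cast this
    rw [Int.fract]; linarith
  · refine le_trans (min_le_right _ _) ?_
    rw [abs_of_neg hx]
    have : ⌊x⌋ ≤ -1 := by
      have := Int.floor_le_floor (le_of_lt hx)
      have h0 : ⌊x⌋ < 0 := Int.floor_lt.mpr (by simpa using hx)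
      omega
    have h2 : (⌊x⌋ : ℝ) ≤ -1 := by exact_mod_cast this
    rw [Int.fract]; linarith

lemma dist_coe_le (s c : ℝ) : dist ((s : ℝ) : 𝕋) ((c : ℝ) : 𝕋) ≤ |s - c| := by
  rw [dist_eq_norm]
  have h1 : ((s : ℝ) : 𝕋) - ((c : ℝ) : 𝕋) = ((s - c : ℝ) : 𝕋) := by
    exact (QuotientAddGroup.mk_sub _ _ _).symm
  rw [h1, AddCircle.norm_eq]
  simpa using abs_sub_round_le_abs (s - c)

lemma dist_coe_eq (s c : ℝ) : dist ((s : ℝ) : 𝕋) ((c : ℝ) : 𝕋) = |s - c - round (s - c)| := by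
  rw [dist_eq_norm]
  have h1 : ((s : ℝ) : 𝕋) - ((c : ℝ) : 𝕋) = ((s - c : ℝ) : 𝕋) := by
    exact (QuotientAddGroup.mk_sub _ _ _).symm
  rw [h1, AddCircle.norm_eq]
  simp

lemma coe_fract (y : ℝ) : ((Int.fract y : ℝ) : 𝕋) = ((y : ℝ) : 𝕋) := by
  have : ((⌊y⌋ : ℝ) : 𝕋) = 0 := by
    rw [AddCircle.coe_eq_zero_iff]
    exact ⟨⌊y⌋, by simp⟩
  have h2 : ((Int.fract y : ℝ) : 𝕋) = ((y : ℝ) : 𝕋) - ((⌊y⌋ : ℝ) : 𝕋) := by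
    rw [Int.fract]; exact QuotientAddGroup.mk_sub _ _ _
  rw [h2, this, sub_zero]

lemma key_dist_lb {q : ℕ} (hq : 1 ≤ q) {j : ℕ} (hj : j < q) {s : ℝ}
    (hs0 : 0 ≤ s) (hs1 : s < 1)
    (hout : s < j / q ∨ ((j:ℝ) + 1) / q ≤ s) :
    1 / (2 * q) ≤ dist ((s : ℝ) : 𝕋) ((((j:ℝ) + 2⁻¹) / q : ℝ) : 𝕋) := by
  have hqR : (0:ℝ) < q := by exact_mod_cast hq
  set c : ℝ := ((j:ℝ) + 2⁻¹) / q with hc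
  set r : ℝ := 1 / (2 * q) with hr
  have hjq : (j:ℝ) ≤ (q:ℝ) - 1 := by
    have : (j:ℝ) + 1 ≤ q := by exact_mod_cast hj
    linarith
  have hcr : r ≤ c := by
    rw [hc, hr, div_le_div_iff₀ (by linarith) hqR]
    ring_nf
    nlinarith [hqR, (Nat.cast_nonneg j : (0:ℝ) ≤ j)]
  have hc1 : c ≤ 1 - r := by
    rw [hc, hr]
    rw [div_le_iff₀ hqR]
    have : 1 / (2 * (q:ℝ)) * q = 2⁻¹ := by field_simp
    nlinarith [hjq]
  have key : ∀ m : ℤ, r ≤ |s - c - m| := by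
    intro m
    rcases lt_trichotomy m 0 with hm | hm | hm
    · have hm1 : (m:ℝ) ≤ -1 := by exact_mod_cast Int.le_of_lt_add_one (by simpa using hm)
      have : s - c - m ≥ 1 - c := by linarith
      have h2 : r ≤ s - c - m := by linarith
      exact le_trans h2 (le_abs_self _)
    · subst hm
      simp only [Int.cast_zero, sub_zero]
      rcases hout with h | h
      · have hjr : (j:ℝ)/q = c - r := by rw [hc, hr]; field_simp; ring
        rw [abs_sub_comm]
        have : s ≤ c - r := by linarith [h, hjr ▸ h]
        calc r ≤ c - s := by linarith
          _ ≤ |c - s| := le_abs_self _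
      · have hjr : ((j:ℝ)+1)/q = c + r := by rw [hc, hr]; field_simp; ring
        have : c + r ≤ s := by linarith [hjr ▸ h]
        calc r ≤ s - c := by linarith
          _ ≤ |s - c| := le_abs_self _
    · have hm1 : (1:ℝ) ≤ m := by exact_mod_cast hm
      have : s - c - m ≤ -c := by linarith
      have h2 : r ≤ -(s - c - m) := by linarith
      exact le_trans h2 (neg_le_abs _)
  rw [dist_coe_eq]
  exact key (round (s - c))

lemma key_dist_ub {q : ℕ} (hq : 1 ≤ q) {j : ℕ} {s : ℝ}
    (hin : (j:ℝ) / q ≤ s ∧ s < ((j:ℝ) + 1) / q) :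
    dist ((s : ℝ) : 𝕋) ((((j:ℝ) + 2⁻¹) / q : ℝ) : 𝕋) ≤ 1 / (2 * q) := by
  have hqR : (0:ℝ) < q := by exact_mod_cast hq
  refine le_trans (dist_coe_le _ _) ?_
  have h1 : (j:ℝ)/q = ((j:ℝ) + 2⁻¹)/q - 1/(2*q) := by field_simp; ring
  have h2 : ((j:ℝ)+1)/q = ((j:ℝ) + 2⁻¹)/q + 1/(2*q) := by field_simp; ring
  rw [abs_le]
  constructor <;> [linarith [h1 ▸ hin.1]; linarith [h2 ▸ hin.2]]

lemma sum_roots {q : ℕ} (hq : 2 ≤ q) {p : ℤ} (hp : ¬ ((q:ℤ) ∣ p)) :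
    ∑ j ∈ Finset.range q, Complex.exp (2 * Real.pi * Complex.I * p * j / q) = 0 := by
  have hqC : (q:ℂ) ≠ 0 := by
    have : q ≠ 0 := by omega
    exact_mod_cast this
  set ω : ℂ := Complex.exp (2 * Real.pi * Complex.I * p / q) with hω
  have hterm : ∀ j : ℕ, Complex.exp (2 * Real.pi * Complex.I * p * j / q) = ω ^ j := by
    intro j
    rw [hω, ← Complex.exp_nat_mul]
    congr 1
    field_simp
  simp_rw [hterm]
  have hω1 : ω ≠ 1 := by
    intro hcon
    rw [hω, Complex.exp_eq_one_iff] at hcon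
    obtain ⟨n, hn⟩ := hcon
    have h2πI : (2 : ℂ) * Real.pi * Complex.I ≠ 0 := by
      simp [Complex.I_ne_zero, Real.pi_ne_zero, Complex.ofReal_ne_zero]
    have hn' : (p:ℂ) = n * q := by
      field_simp at hn
      have h0 : (2 * (Real.pi:ℂ) * Complex.I) * p = (2 * (Real.pi:ℂ) * Complex.I) * (n * q) := by
        linear_combination (2 * (Real.pi:ℂ) * Complex.I) * hn
      exact mul_left_cancel₀ h2πI h0
    have hn'' : p = n * q := by exact_mod_cast hn'
    exact hp ⟨n, by rw [hn'']; ring⟩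
  have hgeom := geom_sum_eq hω1 q
  rw [hgeom]
  have hωq : ω ^ q = 1 := by
    rw [hω, ← Complex.exp_nat_mul]
    have harg : (q:ℂ) * (2 * Real.pi * Complex.I * p / q) = p * (2 * Real.pi * Complex.I) := by
      field_simp
    rw [harg, Complex.exp_int_mul_two_pi_mul_I]
  rw [hωq, sub_self, zero_div]

noncomputable def cmplx (φ : C(𝕋, ℝ)) : C(𝕋, ℂ) :=
  ⟨fun x => ((φ x : ℝ) : ℂ), Complex.continuous_ofReal.comp φ.continuous⟩

lemma weyl_real (z : ℕ → 𝕋)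
    (h : ∀ k : ℤ, k ≠ 0 → Tendsto (fun N : ℕ => (N : ℂ)⁻¹ * ∑ n ∈ Finset.Icc 1 N,
        fourier k (z n)) atTop (nhds 0))
    (φ : C(𝕋, ℝ)) :
    Tendsto (fun N : ℕ => (N : ℝ)⁻¹ * ∑ n ∈ Finset.Icc 1 N, φ (z n)) atTop
      (nhds (∫ x, φ x ∂haarAddCircle)) := by
  have h2 := weyl_cont z h (cmplx φ)
  have hint : (∫ x, (cmplx φ) x ∂haarAddCircle) = ((∫ x, φ x ∂haarAddCircle : ℝ) : ℂ) := by
    simp only [cmplx, ContinuousMap.coe_mk]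
    exact integral_ofReal
  rw [hint] at h2
  have h3 := (Complex.continuous_re.tendsto _).comp h2
  simp only [Complex.ofReal_re] at h3
  refine h3.congr fun N => ?_
  simp only [Function.comp_apply]
  have heq : (N : ℂ)⁻¹ * ∑ n ∈ Finset.Icc 1 N, (cmplx φ) (z n)
      = (((N : ℝ)⁻¹ * ∑ n ∈ Finset.Icc 1 N, φ (z n) : ℝ) : ℂ) := by
    simp only [cmplx, ContinuousMap.coe_mk]
    push_cast
    ring
  rw [heq, Complex.ofReal_re]

lemma cmplx_integral (φ : C(𝕋, ℝ)) :
    (∫ x, (cmplx φ) x ∂haarAddCircle) = ((∫ x, φ x ∂haarAddCircle : ℝ) : ℂ) := by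
  simp only [cmplx, ContinuousMap.coe_mk]
  exact integral_ofReal

/-- If `(a(n)/m mod 1)ₙ` is equidistributed in `ℝ/ℤ` (in the sense of Weyl) for every
integer `m ≥ 2`, then for every rational `γ ∈ ℚ ∖ ℤ`,
`(1/N) ∑_{n=1}^N e^{2πi γ ⌊a(n)⌋} → 0`. -/
theorem stmt8 (a : ℕ → ℝ)
    (hud : ∀ m : ℕ, 2 ≤ m → ∀ k : ℤ, k ≠ 0 →
      Tendsto (fun N : ℕ => (N : ℂ)⁻¹ * ∑ n ∈ Finset.Icc 1 N,
        Complex.exp (2 * Real.pi * Complex.I * (k : ℂ) * ((a n / m : ℝ) : ℂ)))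
        atTop (nhds 0)) :
    ∀ γ : ℚ, γ.den ≠ 1 →
      Tendsto (fun N : ℕ => (N : ℂ)⁻¹ * ∑ n ∈ Finset.Icc 1 N,
        Complex.exp (2 * Real.pi * Complex.I * ((γ : ℝ) : ℂ) * (⌊a n⌋ : ℂ)))
        atTop (nhds 0) := by
  intro γ hγden
  set q : ℕ := γ.den with hqdef
  have hq1 : 1 ≤ q := γ.pos
  have hq2 : 2 ≤ q := by omega
  have hqR : (0:ℝ) < q := by exact_mod_cast hq1
  have hqC : (q:ℂ) ≠ 0 := by
    have : q ≠ 0 := by omega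
    exact_mod_cast this
  set p : ℤ := γ.num with hpdef
  have hndvd : ¬ ((q:ℤ) ∣ p) := by
    intro hd
    have hc : Nat.Coprime p.natAbs q := γ.reduced
    have h1 : q ∣ p.natAbs := Int.natCast_dvd.mp hd
    have h2 : q ∣ Nat.gcd p.natAbs q := Nat.dvd_gcd h1 dvd_rfl
    rw [Nat.coprime_iff_gcd_eq_one.mp hc] at h2
    exact absurd (Nat.le_of_dvd one_pos h2) (by omega)
  set y : ℕ → ℝ := fun n => a n / q with hy
  set z : ℕ → 𝕋 := fun n => ((y n : ℝ) : 𝕋) with hz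
  -- Weyl hypothesis in fourier form
  have hW : ∀ k : ℤ, k ≠ 0 → Tendsto (fun N : ℕ => (N : ℂ)⁻¹ * ∑ n ∈ Finset.Icc 1 N,
      fourier k (z n)) atTop (nhds 0) := by
    intro k hk
    refine (hud q hq2 k hk).congr fun N => ?_
    congr 1
    refine Finset.sum_congr rfl fun n _ => ?_
    rw [hz, fourier_coe_apply, Complex.ofReal_one, div_one]
  -- fractional part data
  set J : ℕ → ℕ := fun n => (⌊(q:ℝ) * Int.fract (y n)⌋).toNat with hJ
  have hJfloor : ∀ n, (J n : ℤ) = ⌊(q:ℝ) * Int.fract (y n)⌋ := fun n =>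
    Int.toNat_of_nonneg (Int.floor_nonneg.mpr (mul_nonneg hqR.le (Int.fract_nonneg _)))
  have hJlt : ∀ n, J n < q := by
    intro n
    have h1 : ⌊(q:ℝ) * Int.fract (y n)⌋ < (q:ℤ) := by
      refine Int.floor_lt.mpr ?_
      push_cast
      nlinarith [Int.fract_lt_one (y n), Int.fract_nonneg (y n)]
    have := hJfloor n
    omega
  have hJin : ∀ n, ((J n : ℝ))/q ≤ Int.fract (y n) ∧ Int.fract (y n) < ((J n : ℝ) + 1)/q := by
    intro n
    have h1 : ((J n : ℤ) : ℝ) ≤ (q:ℝ) * Int.fract (y n) := by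
      rw [hJfloor n]; exact Int.floor_le _
    have h2 : (q:ℝ) * Int.fract (y n) < (J n : ℤ) + 1 := by
      rw [hJfloor n]; exact Int.lt_floor_add_one _
    constructor
    · rw [div_le_iff₀ hqR]; push_cast at h1 ⊢; linarith
    · rw [lt_div_iff₀ hqR]; push_cast at h2 ⊢; linarith
  have hJuniq : ∀ n (j : ℕ), ((j:ℝ))/q ≤ Int.fract (y n) → Int.fract (y n) < ((j:ℝ) + 1)/q →
      J n = j := by
    intro n j hl hr
    have h1 : (j : ℝ) ≤ (q:ℝ) * Int.fract (y n) := by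
      rw [div_le_iff₀ hqR] at hl; linarith
    have h2 : (q:ℝ) * Int.fract (y n) < (j:ℝ) + 1 := by
      rw [lt_div_iff₀ hqR] at hr; linarith
    have : ⌊(q:ℝ) * Int.fract (y n)⌋ = (j:ℤ) := by
      refine Int.floor_eq_iff.mpr ⟨by exact_mod_cast h1, by exact_mod_cast h2⟩
    have := hJfloor n
    omega
  -- floor decomposition
  have hfloor : ∀ n, ⌊a n⌋ = q * ⌊y n⌋ + J n := by
    intro n
    have han : a n = (q:ℝ) * y n := by
      rw [hy]; field_simp
    have hdec : (q:ℝ) * y n = (q:ℝ) * Int.fract (y n) + ((q * ⌊y n⌋ : ℤ) : ℝ) := by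
      rw [Int.fract]; push_cast; ring
    rw [han, hdec, Int.floor_add_intCast, ← hJfloor n]
    ring
  -- roots of unity
  set c : ℕ → ℂ := fun j => Complex.exp (2 * Real.pi * Complex.I * p * j / q) with hcdef
  have hcnorm : ∀ j, ‖c j‖ = 1 := by
    intro j
    have harg : 2 * (Real.pi:ℂ) * Complex.I * p * j / q
        = ((2 * Real.pi * p * j / q : ℝ) : ℂ) * Complex.I := by
      push_cast; ring
    show ‖Complex.exp (2 * (Real.pi:ℂ) * Complex.I * p * j / q)‖ = 1
    rw [harg, Complex.norm_exp_ofReal_mul_I]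
  have hsum0 : ∑ j ∈ Finset.range q, c j = 0 := sum_roots hq2 hndvd
  -- summand identity
  have htarget : ∀ n, Complex.exp (2 * Real.pi * Complex.I * ((γ : ℝ) : ℂ) * (⌊a n⌋ : ℂ))
      = c (J n) := by
    intro n
    have hγℝ : ((γ : ℝ) : ℂ) = (p : ℂ) / (q : ℂ) := by
      rw [Rat.cast_def]
      push_cast
      rfl
    have hcast : ((⌊a n⌋ : ℤ) : ℂ) = ((q * ⌊y n⌋ + J n : ℤ) : ℂ) := by
      exact_mod_cast congrArg (fun m : ℤ => (m : ℂ)) (hfloor n)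
    rw [hγℝ, hcast]
    have hsplit : 2 * (Real.pi:ℂ) * Complex.I * ((p:ℂ)/(q:ℂ)) * ((q * ⌊y n⌋ + J n : ℤ) : ℂ)
        = ((p * ⌊y n⌋ : ℤ) : ℂ) * (2 * Real.pi * Complex.I)
          + 2 * Real.pi * Complex.I * p * (J n) / q := by
      push_cast
      field_simp
    rw [hsplit, Complex.exp_add, Complex.exp_int_mul_two_pi_mul_I, one_mul, hcdef]
  -- main estimate
  rw [NormedAddCommGroup.tendsto_nhds_zero]
  intro ε hε
  set δ : ℝ := min (ε / (20 * q)) (1 / (4 * q)) with hδdef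
  have hδ0 : 0 < δ := lt_min (by positivity) (by positivity)
  have hδa : δ ≤ ε / (20 * q) := min_le_left _ _
  have hδb : δ ≤ 1 / (4 * q) := min_le_right _ _
  set r : ℝ := 1 / (2 * q) with hrdef
  have hr0 : 0 < r := by positivity
  have hδr : δ < r := by
    refine lt_of_le_of_lt hδb ?_
    rw [hrdef, div_lt_div_iff₀ (by positivity) (by positivity)]
    nlinarith
  set lo : ℕ → C(𝕋, ℝ) := fun j => rbump (((j:ℝ) + 2⁻¹)/q) r δ with hlodef
  set hi : ℕ → C(𝕋, ℝ) := fun j => rbump (((j:ℝ) + 2⁻¹)/q) (r + 2*δ) δ with hhidef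
  -- pointwise sandwich facts
  have P1 : ∀ n j, j < q → J n ≠ j → lo j (z n) = 0 := by
    intro n j hj hne
    simp only [hlodef]
    refine rbump_eq_zero hδ0 ?_
    have hzn : z n = ((Int.fract (y n) : ℝ) : 𝕋) := (_root_.coe_fract (y n)).symm
    rw [hzn, hrdef]
    refine key_dist_lb hq1 hj (Int.fract_nonneg _) (Int.fract_lt_one _) ?_
    by_contra hcon
    push_neg at hcon
    exact hne (hJuniq n j hcon.1 hcon.2)
  have P2 : ∀ n j, J n = j → hi j (z n) = 1 := by
    intro n j heq
    simp only [hhidef]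
    refine rbump_eq_one hδ0 ?_
    have hzn : z n = ((Int.fract (y n) : ℝ) : 𝕋) := (_root_.coe_fract (y n)).symm
    rw [hzn]
    have : dist ((Int.fract (y n) : ℝ) : 𝕋) ((((j:ℝ) + 2⁻¹)/q : ℝ) : 𝕋) ≤ 1/(2*q) := by
      refine key_dist_ub hq1 ?_
      rw [← heq]
      exact hJin n
    rw [hrdef]
    calc dist _ _ ≤ 1/(2*(q:ℝ)) := this
      _ ≤ 1/(2*q) + 2*δ - δ := by linarith
  have hlo0 : ∀ (j : ℕ) (x : 𝕋), 0 ≤ lo j x := by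
    intro j x; simp only [hlodef]; exact rbump_nonneg _ _ _ _
  have hlo1 : ∀ (j : ℕ) (x : 𝕋), lo j x ≤ 1 := by
    intro j x; simp only [hlodef]; exact rbump_le_one _ _ _ _
  have hhi0 : ∀ (j : ℕ) (x : 𝕋), 0 ≤ hi j x := by
    intro j x; simp only [hhidef]; exact rbump_nonneg _ _ _ _
  -- per-n bound
  have hnbound : ∀ n, ‖Complex.exp (2 * Real.pi * Complex.I * ((γ : ℝ) : ℂ) * (⌊a n⌋ : ℂ))
      - ∑ j ∈ Finset.range q, c j * ((lo j (z n) : ℝ) : ℂ)‖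
      ≤ ∑ j ∈ Finset.range q, (hi j (z n) - lo j (z n)) := by
    intro n
    rw [htarget n]
    have hcollapse : c (J n) = ∑ j ∈ Finset.range q,
        c j * (((if J n = j then (1:ℝ) else 0) : ℝ) : ℂ) := by
      rw [Finset.sum_eq_single (J n)]
      · simp
      · intro j _ hne
        rw [if_neg (fun h => hne h.symm)]
        simp
      · intro habs
        exact absurd (Finset.mem_range.mpr (hJlt n)) habs
    rw [hcollapse, ← Finset.sum_sub_distrib]
    refine le_trans (norm_sum_le _ _) (Finset.sum_le_sum fun j hj => ?_)
    have hjq : j < q := Finset.mem_range.mp hj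
    rw [← mul_sub, norm_mul, hcnorm j, one_mul, ← Complex.ofReal_sub,
      Complex.norm_real, Real.norm_eq_abs]
    by_cases hJj : J n = j
    · rw [if_pos hJj]
      have h1 : lo j (z n) ≤ 1 := hlo1 j (z n)
      have h0 : 0 ≤ lo j (z n) := hlo0 j (z n)
      rw [abs_of_nonneg (by linarith)]
      have h2 : hi j (z n) = 1 := P2 n j hJj
      linarith
    · rw [if_neg hJj, P1 n j hjq hJj]
      simpa using hhi0 j (z n)
  -- define B, D
  set T : ℕ → ℂ := fun N => (N : ℂ)⁻¹ * ∑ n ∈ Finset.Icc 1 N,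
      Complex.exp (2 * Real.pi * Complex.I * ((γ : ℝ) : ℂ) * (⌊a n⌋ : ℂ)) with hTdef
  set B : ℕ → ℂ := fun N => (N : ℂ)⁻¹ * ∑ n ∈ Finset.Icc 1 N,
      ∑ j ∈ Finset.range q, c j * ((lo j (z n) : ℝ) : ℂ) with hBdef
  set D : ℕ → ℝ := fun N => (N : ℝ)⁻¹ * ∑ n ∈ Finset.Icc 1 N,
      ∑ j ∈ Finset.range q, (hi j (z n) - lo j (z n)) with hDdef
  have hTB : ∀ N, ‖T N - B N‖ ≤ D N := by
    intro N
    simp only [hTdef, hBdef, hDdef]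
    rw [← mul_sub, ← Finset.sum_sub_distrib, norm_mul]
    have hNn : ‖(N:ℂ)⁻¹‖ = (N:ℝ)⁻¹ := by
      rw [norm_inv]; norm_cast
    rw [hNn]
    refine mul_le_mul_of_nonneg_left ?_ (by positivity)
    exact le_trans (norm_sum_le _ _) (Finset.sum_le_sum fun n _ => hnbound n)
  -- limits
  have hDlim : Tendsto D atTop (nhds (∑ j ∈ Finset.range q,
      ((∫ x, hi j x ∂haarAddCircle) - (∫ x, lo j x ∂haarAddCircle)))) := by
    have hrw : ∀ N : ℕ, D N = ∑ j ∈ Finset.range q,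
        ((N : ℝ)⁻¹ * ∑ n ∈ Finset.Icc 1 N, hi j (z n)
          - (N : ℝ)⁻¹ * ∑ n ∈ Finset.Icc 1 N, lo j (z n)) := by
      intro N
      simp only [hDdef]
      rw [Finset.sum_comm]
      rw [Finset.mul_sum]
      refine Finset.sum_congr rfl fun j _ => ?_
      rw [Finset.sum_sub_distrib, mul_sub]
    refine Tendsto.congr (fun N => (hrw N).symm) ?_
    exact tendsto_finset_sum _ fun j _ => (weyl_real z hW (hi j)).sub (weyl_real z hW (lo j))
  set L : ℂ := ∑ j ∈ Finset.range q, c j * ((∫ x, lo j x ∂haarAddCircle : ℝ) : ℂ) with hLdef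
  have hBlim : Tendsto B atTop (nhds L) := by
    have hrw : ∀ N : ℕ, B N = ∑ j ∈ Finset.range q,
        c j * ((N : ℂ)⁻¹ * ∑ n ∈ Finset.Icc 1 N, ((lo j (z n) : ℝ) : ℂ)) := by
      intro N
      simp only [hBdef, Finset.mul_sum]
      rw [Finset.sum_comm]
      exact Finset.sum_congr rfl fun j _ => Finset.sum_congr rfl fun n _ => by ring
    refine Tendsto.congr (fun N => (hrw N).symm) ?_
    rw [hLdef]
    refine tendsto_finset_sum _ fun j _ => ?_
    have h1 := weyl_cont z hW (cmplx (lo j))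
    rw [cmplx_integral] at h1
    exact h1.const_mul (c j)
  -- integral bounds
  have hq_le_one : 1/(q:ℝ) ≤ 1 := by
    rw [div_le_one hqR]; exact_mod_cast hq1
  have h2r : 2 * r = 1/(q:ℝ) := by rw [hrdef]; field_simp
  have hlo_ub : ∀ j : ℕ, ∫ x, lo j x ∂haarAddCircle ≤ 1/(q:ℝ) := by
    intro j
    simp only [hlodef]
    refine le_trans (integral_rbump_le hδ0 hr0.le) ?_
    rw [h2r]
    exact min_le_right _ _
  have hlo_lb : ∀ j : ℕ, 1/(q:ℝ) - 2*δ ≤ ∫ x, lo j x ∂haarAddCircle := by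
    intro j
    simp only [hlodef]
    refine le_trans ?_ (le_integral_rbump hδ0 hδr.le)
    have heq : 2 * (r - δ) = 1/(q:ℝ) - 2*δ := by rw [← h2r]; ring
    rw [heq]
    exact le_min (by linarith) (le_refl _)
  have hhi_ub : ∀ j : ℕ, ∫ x, hi j x ∂haarAddCircle ≤ 1/(q:ℝ) + 4*δ := by
    intro j
    simp only [hhidef]
    refine le_trans (integral_rbump_le hδ0 (by linarith)) ?_
    refine le_trans (min_le_right _ _) ?_
    rw [← h2r]; linarith
  -- bound on limit of D
  have hDlim_ub : (∑ j ∈ Finset.range q,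
      ((∫ x, hi j x ∂haarAddCircle) - (∫ x, lo j x ∂haarAddCircle))) ≤ 6*q*δ := by
    calc (∑ j ∈ Finset.range q, ((∫ x, hi j x ∂haarAddCircle) - (∫ x, lo j x ∂haarAddCircle)))
        ≤ ∑ _j ∈ Finset.range q, 6*δ := by
          refine Finset.sum_le_sum fun j _ => ?_
          have := hhi_ub j
          have := hlo_lb j
          linarith
      _ = 6*q*δ := by
          rw [Finset.sum_const, Finset.card_range, nsmul_eq_mul]; ring
  -- bound on L
  have hLnorm : ‖L‖ ≤ 2*q*δ := by
    have hsplit : L = ∑ j ∈ Finset.range q,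
        c j * (((∫ x, lo j x ∂haarAddCircle) - 1/(q:ℝ) : ℝ) : ℂ)
          + (∑ j ∈ Finset.range q, c j) * ((1/(q:ℝ) : ℝ) : ℂ) := by
      rw [hLdef, Finset.sum_mul, ← Finset.sum_add_distrib]
      refine Finset.sum_congr rfl fun j _ => ?_
      push_cast
      ring
    rw [hsplit, hsum0, zero_mul, add_zero]
    refine le_trans (norm_sum_le _ _) ?_
    calc ∑ j ∈ Finset.range q, ‖c j * (((∫ x, lo j x ∂haarAddCircle) - 1/(q:ℝ) : ℝ) : ℂ)‖
        ≤ ∑ _j ∈ Finset.range q, 2*δ := by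
          refine Finset.sum_le_sum fun j _ => ?_
          rw [norm_mul, hcnorm j, one_mul, Complex.norm_real, Real.norm_eq_abs]
          rw [abs_le]
          constructor
          · have := hlo_lb j; linarith
          · have := hlo_ub j; linarith
      _ = 2*q*δ := by
          rw [Finset.sum_const, Finset.card_range, nsmul_eq_mul]; ring
  -- finish
  have h1 : ∀ᶠ N in atTop, D N < 6*q*δ + δ :=
    hDlim.eventually_lt_const (by linarith)
  have h2 : ∀ᶠ N in atTop, dist (B N) L < δ :=
    (Metric.tendsto_nhds.mp hBlim) δ hδ0
  filter_upwards [h1, h2] with N hN1 hN2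
  have hq1R : (1:ℝ) ≤ q := by exact_mod_cast hq1
  calc ‖T N‖ = ‖(T N - B N) + ((B N - L) + L)‖ := by congr 1; ring
    _ ≤ ‖T N - B N‖ + ‖(B N - L) + L‖ := norm_add_le _ _
    _ ≤ ‖T N - B N‖ + (‖B N - L‖ + ‖L‖) := by linarith [norm_add_le (B N - L) L]
    _ ≤ D N + (‖B N - L‖ + ‖L‖) := by linarith [hTB N]
    _ < (6*q*δ + δ) + (δ + 2*q*δ) := by
        rw [dist_eq_norm] at hN2
        linarith
    _ ≤ 10*q*δ := by nlinarith
    _ ≤ 10*q*(ε/(20*q)) := by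
        refine mul_le_mul_of_nonneg_left hδa (by positivity)
    _ = ε/2 := by field_simp; ring
    _ < ε := by linarith
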